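/- arXiv:2112.15002 — 2 statements merged into one kernel-verified Lean document; each statement's English description precedes it below -/
import Mathlib

section
/- Let d ≥ 1, let G ∈ M_d(ℂ) be a Hermitian unitary matrix, let O ∈ M_d(ℂ) be Hermitian, and let ρ ∈ M_d(ℂ) be a density matrix. With W_±(θ) = exp(−i(θ ± π/4)G) and O₂ = (O − G·O·G)/2, one has (1/(2π)) ∫₀^{2π} ( Tr[O·W₊(θ)·ρ·W₊(θ)†] − Tr[O·W₋(θ)·ρ·W₋(θ)†] )² dθ = 2·(Tr[O₂ρ])² + 2·(Tr[iO₂Gρ])². -/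
open Matrix MeasureTheory
open scoped ComplexOrder

noncomputable section

/-- The rotation `W(θ) = exp(−iθG)` generated by a matrix `G`. -/
def Wrot {d : ℕ} (G : Matrix (Fin d) (Fin d) ℂ) (θ : ℝ) : Matrix (Fin d) (Fin d) ℂ :=
  NormedSpace.exp ((-(Complex.I * (θ : ℂ))) • G)

/-- The commuting part `O₁ = (O + G·O·G)/2` of `O` with respect to `G`. -/
def Opart1 {d : ℕ} (G O : Matrix (Fin d) (Fin d) ℂ) : Matrix (Fin d) (Fin d) ℂ :=
  (2⁻¹ : ℂ) • (O + G * O * G)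

/-- The anticommuting part `O₂ = (O − G·O·G)/2` of `O` with respect to `G`. -/
def Opart2 {d : ℕ} (G O : Matrix (Fin d) (Fin d) ℂ) : Matrix (Fin d) (Fin d) ℂ :=
  (2⁻¹ : ℂ) • (O - G * O * G)

lemma wrot_eq {d : ℕ} (G : Matrix (Fin d) (Fin d) ℂ) (hGunit : G * G = 1) (θ : ℝ) :
    NormedSpace.exp ((-(Complex.I * (θ : ℂ))) • G)
      = (Real.cos θ : ℂ) • (1 : Matrix (Fin d) (Fin d) ℂ)
        + (-(Complex.I * (Real.sin θ : ℂ))) • G := by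
  have hG2 : G ^ 2 = 1 := by rw [sq, hGunit]
  have hc2 : (-(Complex.I * (θ : ℂ))) ^ 2 = -((θ:ℂ)^2) := by
    have h : Complex.I ^ 2 = -1 := Complex.I_sq
    ring_nf
    rw [h]; ring
  have heven : ∀ k : ℕ, ((-(Complex.I * (θ:ℂ))) • G) ^ (2*k)
      = ((-((θ:ℂ)^2))^k) • (1 : Matrix (Fin d) (Fin d) ℂ) := by
    intro k
    rw [smul_pow, pow_mul, hc2, pow_mul, hG2, one_pow]
  have hodd : ∀ k : ℕ, ((-(Complex.I * (θ:ℂ))) • G) ^ (2*k+1)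
      = (((-((θ:ℂ)^2))^k) * (-(Complex.I * (θ:ℂ)))) • G := by
    intro k
    rw [pow_succ, heven, smul_mul_assoc, one_mul, smul_smul]
  rw [NormedSpace.exp_eq_tsum ℂ]
  refine HasSum.tsum_eq ?_
  refine HasSum.even_add_odd ?_ ?_
  · have hc := (Complex.hasSum_cos (θ:ℂ)).smul_const (1 : Matrix (Fin d) (Fin d) ℂ)
    rw [← Complex.ofReal_cos] at hc
    convert hc using 1
    · rfl
    funext k
    rw [heven, smul_smul]
    congr 1
    rw [neg_pow, div_eq_mul_inv, pow_mul]
    ring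
  · have hs := ((Complex.hasSum_sin (θ:ℂ)).mul_left (-Complex.I)).smul_const G
    rw [← Complex.ofReal_sin] at hs
    convert hs using 1
    · rfl
    · funext k
      rw [hodd, smul_smul]
      congr 1
      have hp : (θ:ℂ)^(2*k+1) = ((θ:ℂ)^2)^k * θ := by rw [pow_succ, pow_mul]
      rw [neg_pow, div_eq_mul_inv, hp]
      ring
    · congr 1
      ring

lemma trace_formula {d : ℕ} (G O ρ : Matrix (Fin d) (Fin d) ℂ)
    (hGherm : G.IsHermitian) (hGunit : G * G = 1) (θ : ℝ) :
    (O * (Wrot G θ * ρ * (Wrot G θ)ᴴ)).trace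
      = ((Real.cos θ ^ 2 : ℝ) : ℂ) * (O * ρ).trace
        + ((Real.cos θ * Real.sin θ : ℝ) : ℂ)
            * (Complex.I * ((O * (ρ * G)).trace - (O * (G * ρ)).trace))
        + ((Real.sin θ ^ 2 : ℝ) : ℂ) * (O * (G * (ρ * G))).trace := by
  rw [Wrot, wrot_eq G hGunit]
  have hGH : Gᴴ = G := hGherm
  simp only [conjTranspose_add, conjTranspose_smul, conjTranspose_one, hGH,
    star_neg, star_mul', Complex.star_def, Complex.conj_I, Complex.conj_ofReal]
  simp only [Matrix.add_mul, Matrix.mul_add, Matrix.smul_mul, Matrix.mul_smul, smul_smul,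
    Matrix.one_mul, Matrix.mul_one, trace_add, trace_smul, smul_eq_mul, Matrix.mul_assoc]
  push_cast
  ring_nf
  simp [Complex.I_sq]

lemma sin4pi' : Real.sin (4 * Real.pi) = 0 := by
  have := Real.sin_nat_mul_pi 4; norm_num at this ⊢; exact this

lemma cos4pi' : Real.cos (4 * Real.pi) = 1 := by
  have := Real.cos_nat_mul_two_pi 2
  norm_num at this
  rw [show (4:ℝ)*Real.pi = 2*(2*Real.pi) by ring]
  exact this

lemma integral_sq' (K L : ℝ) :
    (∫ θ in (0:ℝ)..(2 * Real.pi), (K * Real.sin (2*θ) + L * Real.cos (2*θ))^2)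
      = Real.pi * (K^2 + L^2) := by
  have hcomp := intervalIntegral.integral_comp_mul_left
    (fun u => (K * Real.sin u + L * Real.cos u)^2) (a := 0) (b := 2 * Real.pi)
    (c := (2:ℝ)) two_ne_zero
  simp only [mul_zero] at hcomp
  rw [hcomp]
  have hexp : ∀ u : ℝ, (K * Real.sin u + L * Real.cos u)^2
      = K^2 * Real.sin u ^2 + ((2*K*L) * (Real.sin u * Real.cos u) + L^2 * Real.cos u ^2) := by
    intro u; ring
  rw [intervalIntegral.integral_congr (fun u _ => hexp u)]
  have i1 : IntervalIntegrable (fun u => K^2 * Real.sin u ^2) volume 0 (2*(2*Real.pi)) := by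
    apply Continuous.intervalIntegrable; continuity
  have i2 : IntervalIntegrable (fun u => (2*K*L) * (Real.sin u * Real.cos u)) volume 0 (2*(2*Real.pi)) := by
    apply Continuous.intervalIntegrable; continuity
  have i3 : IntervalIntegrable (fun u => L^2 * Real.cos u ^2) volume 0 (2*(2*Real.pi)) := by
    apply Continuous.intervalIntegrable; continuity
  rw [intervalIntegral.integral_add i1 (i2.add i3), intervalIntegral.integral_add i2 i3,
    intervalIntegral.integral_const_mul, intervalIntegral.integral_const_mul,
    intervalIntegral.integral_const_mul, integral_sin_sq, integral_sin_mul_cos₁, integral_cos_sq]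
  have h4 : 2*(2*Real.pi) = 4 * Real.pi := by ring
  rw [h4, sin4pi', cos4pi']
  simp
  ring

lemma trig1' (θ : ℝ) : Real.cos (θ + Real.pi/4)^2 - Real.cos (θ - Real.pi/4)^2 = - Real.sin (2*θ) := by
  have h2 : Real.sqrt 2 ^ 2 = 2 := Real.sq_sqrt (by norm_num)
  simp only [Real.cos_add, Real.cos_sub, Real.cos_pi_div_four, Real.sin_pi_div_four,
    Real.sin_two_mul]
  nlinarith [h2]

lemma trig2' (θ : ℝ) : Real.cos (θ + Real.pi/4) * Real.sin (θ + Real.pi/4)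
    - Real.cos (θ - Real.pi/4) * Real.sin (θ - Real.pi/4) = Real.cos (2*θ) := by
  have h2 : Real.sqrt 2 ^ 2 = 2 := Real.sq_sqrt (by norm_num)
  simp only [Real.cos_add, Real.cos_sub, Real.sin_add, Real.sin_sub, Real.cos_pi_div_four,
    Real.sin_pi_div_four, Real.cos_two_mul]
  nlinarith [h2, Real.sin_sq_add_cos_sq θ]

lemma trig3' (θ : ℝ) : Real.sin (θ + Real.pi/4)^2 - Real.sin (θ - Real.pi/4)^2 = Real.sin (2*θ) := by
  have h2 : Real.sqrt 2 ^ 2 = 2 := Real.sq_sqrt (by norm_num)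
  simp only [Real.sin_add, Real.sin_sub, Real.cos_pi_div_four, Real.sin_pi_div_four,
    Real.sin_two_mul]
  nlinarith [h2]

/-- **Lemma 3**: for a Hermitian unitary `G`, a Hermitian observable `O` and a density
matrix `ρ`, with `W_±(θ) = exp(−i(θ ± π/4)G)` and `O₂ = (O − GOG)/2`,
`E_θ (Tr[O W₊ ρ W₊†] − Tr[O W₋ ρ W₋†])² = 2 Tr[O₂ρ]² + 2 Tr[iO₂Gρ]²`,
with `θ` uniform on `[0, 2π]`. -/
theorem expectation_shifted_difference_sq
    (d : ℕ) (hd : 1 ≤ d)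
    (G O : Matrix (Fin d) (Fin d) ℂ)
    (hGherm : G.IsHermitian) (hGunit : G * G = 1) (hO : O.IsHermitian)
    (ρ : Matrix (Fin d) (Fin d) ℂ) (hρ : ρ.PosSemidef) (hρtr : ρ.trace = 1) :
    (1 / (2 * Real.pi)) * ∫ θ in (0:ℝ)..(2 * Real.pi),
        (((O * (Wrot G (θ + Real.pi / 4) * ρ * (Wrot G (θ + Real.pi / 4))ᴴ)).trace.re)
          - ((O * (Wrot G (θ - Real.pi / 4) * ρ * (Wrot G (θ - Real.pi / 4))ᴴ)).trace.re)) ^ 2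
      = 2 * ((Opart2 G O * ρ).trace.re) ^ 2
        + 2 * (((Complex.I • (Opart2 G O * G)) * ρ).trace.re) ^ 2 := by
  set A : ℂ := (O * ρ).trace with hA
  set X : ℂ := Complex.I * ((O * (ρ * G)).trace - (O * (G * ρ)).trace) with hX
  set D : ℂ := (O * (G * (ρ * G))).trace with hD
  -- real part of the trace at a point
  have hre : ∀ θ : ℝ, (O * (Wrot G θ * ρ * (Wrot G θ)ᴴ)).trace.re
      = Real.cos θ ^ 2 * A.re + (Real.cos θ * Real.sin θ) * X.re + Real.sin θ ^ 2 * D.re := by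
    intro θ
    rw [trace_formula G O ρ hGherm hGunit θ, Complex.add_re, Complex.add_re,
      Complex.re_ofReal_mul, Complex.re_ofReal_mul, Complex.re_ofReal_mul]
  -- the pointwise difference
  have hdiff : ∀ θ : ℝ,
      ((O * (Wrot G (θ + Real.pi / 4) * ρ * (Wrot G (θ + Real.pi / 4))ᴴ)).trace.re
        - (O * (Wrot G (θ - Real.pi / 4) * ρ * (Wrot G (θ - Real.pi / 4))ᴴ)).trace.re)
      = (D.re - A.re) * Real.sin (2*θ) + X.re * Real.cos (2*θ) := by
    intro θ
    rw [hre, hre]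
    have h1 := trig1' θ
    have h2 := trig2' θ
    have h3 := trig3' θ
    linear_combination A.re * h1 + X.re * h2 + D.re * h3
  -- rewrite the integrand
  have hint : (∫ θ in (0:ℝ)..(2 * Real.pi),
        (((O * (Wrot G (θ + Real.pi / 4) * ρ * (Wrot G (θ + Real.pi / 4))ᴴ)).trace.re)
          - ((O * (Wrot G (θ - Real.pi / 4) * ρ * (Wrot G (θ - Real.pi / 4))ᴴ)).trace.re)) ^ 2)
      = Real.pi * ((D.re - A.re)^2 + X.re^2) := by
    rw [intervalIntegral.integral_congr (g := fun θ =>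
      ((D.re - A.re) * Real.sin (2*θ) + X.re * Real.cos (2*θ))^2) (fun θ _ => by rw [hdiff])]
    exact integral_sq' _ _
  rw [hint]
  -- identify the right-hand side traces
  have hGOGρ : (G * O * G * ρ).trace = D := by
    rw [hD, Matrix.mul_assoc, Matrix.mul_assoc, Matrix.trace_mul_comm]
    simp [Matrix.mul_assoc]
  have ht1 : (Opart2 G O * ρ).trace = ((2:ℂ))⁻¹ * (A - D) := by
    rw [Opart2, Matrix.smul_mul, trace_smul, smul_eq_mul, Matrix.sub_mul, trace_sub, hGOGρ, hA]
  have hGOρ : (G * (O * ρ)).trace = (O * (ρ * G)).trace := by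
    rw [Matrix.trace_mul_comm, Matrix.mul_assoc]
  have ht2 : ((Complex.I • (Opart2 G O * G)) * ρ).trace = -(((2:ℂ))⁻¹ * X) := by
    rw [Opart2, Matrix.smul_mul (2⁻¹:ℂ), smul_smul, Matrix.smul_mul, trace_smul, smul_eq_mul,
      Matrix.sub_mul, Matrix.sub_mul, trace_sub]
    have hmid : G * O * G * G * ρ = G * (O * ρ) := by
      rw [Matrix.mul_assoc (G*O) G G, hGunit, Matrix.mul_one, Matrix.mul_assoc]
    rw [hmid, hGOρ, hX]
    have : (O * G * ρ).trace = (O * (G * ρ)).trace := by rw [Matrix.mul_assoc]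
    rw [this]
    ring
  have ha : (Opart2 G O * ρ).trace.re = (A.re - D.re) / 2 := by
    rw [ht1]
    have : ((2:ℂ))⁻¹ * (A - D) = ((2⁻¹:ℝ):ℂ) * (A - D) := by norm_num
    rw [this, Complex.re_ofReal_mul, Complex.sub_re]
    ring
  have hb : ((Complex.I • (Opart2 G O * G)) * ρ).trace.re = -(X.re / 2) := by
    rw [ht2, Complex.neg_re]
    have : ((2:ℂ))⁻¹ * X = ((2⁻¹:ℝ):ℂ) * X := by norm_num
    rw [this, Complex.re_ofReal_mul]
    ring
  rw [ha, hb]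
  have hπ : Real.pi ≠ 0 := Real.pi_ne_zero
  field_simp
  ring
end
end

section
/- Let d ≥ 1, let G ∈ M_d(ℂ) be a Hermitian unitary matrix, let O ∈ M_d(ℂ) be Hermitian, and let ρ ∈ M_d(ℂ) be a density matrix. With W(θ) = exp(−iθG), O₁ = (O + G·O·G)/2, and O₂ = (O − G·O·G)/2, for every θ ∈ ℝ one has Tr[O·W(θ)·ρ·W(θ)†] = Tr[O₁ρ] + cos(2θ)·Tr[O₂ρ] − sin(2θ)·Tr[iO₂Gρ]. -/
open Matrix MeasureTheory
open scoped ComplexOrder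

noncomputable section

section Aux

attribute [local instance] Matrix.linftyOpNormedRing Matrix.linftyOpNormedAlgebra

open NormedSpace in
/-- `exp (c • G) = cosh c • 1 + sinh c • G` for an involution `G`. -/
lemma exp_smul_involution {d : ℕ} (G : Matrix (Fin d) (Fin d) ℂ)
    (hG : G * G = 1) (c : ℂ) :
    exp (c • G)
      = (((Complex.exp c + Complex.exp (-c)) / 2) • (1 : Matrix (Fin d) (Fin d) ℂ))
        + (((Complex.exp c - Complex.exp (-c)) / 2) • G) := by
  set P : Matrix (Fin d) (Fin d) ℂ := (2⁻¹:ℂ) • (1 + G) with hP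
  set Q : Matrix (Fin d) (Fin d) ℂ := (2⁻¹:ℂ) • (1 - G) with hQ
  have hmul : ∀ x y : ℂ × ℂ, (x.1 • P + x.2 • Q) * (y.1 • P + y.2 • Q)
      = (x.1 * y.1) • P + (x.2 * y.2) • Q := by
    intro x y
    simp only [hP, hQ, Matrix.add_mul, Matrix.mul_add, smul_mul_assoc, Matrix.mul_smul,
      Matrix.mul_one, Matrix.one_mul, mul_one, one_mul, add_mul, mul_add, sub_mul, mul_sub, hG]
    module
  let φ : (ℂ × ℂ) →ₐ[ℂ] Matrix (Fin d) (Fin d) ℂ :=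
  { toFun := fun x => x.1 • P + x.2 • Q
    map_one' := by simp [hP, hQ]; module
    map_mul' := by intro x y; exact (hmul x y).symm
    map_zero' := by simp
    map_add' := by intro x y; simp [add_smul]; abel
    commutes' := by
      intro a
      simp [Algebra.algebraMap_eq_smul_one, hP, hQ, Prod.smul_def, smul_smul]
      module }
  have hφc : Continuous φ := by
    show Continuous fun x : ℂ × ℂ => x.1 • P + x.2 • Q
    fun_prop
  have key : c • G = φ (c, -c) := by
    show c • G = c • P + (-c) • Q
    simp [hP, hQ]; module
  rw [key]
  refine (map_exp φ hφc (c, -c)).symm.trans ?_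
  have hexp : exp ((c, -c) : ℂ × ℂ) = (Complex.exp c, Complex.exp (-c)) := by
    ext
    · rw [Prod.fst_exp, Complex.exp_eq_exp_ℂ]
    · rw [Prod.snd_exp, Complex.exp_eq_exp_ℂ]
  rw [hexp]
  show Complex.exp c • P + Complex.exp (-c) • Q = _
  simp [hP, hQ]
  module

end Aux

/-- The rotation is `cos θ • 1 − i sin θ • G` when `G² = 1`. -/
lemma Wrot_eq {d : ℕ} (G : Matrix (Fin d) (Fin d) ℂ) (hG : G * G = 1) (θ : ℝ) :
    Wrot G θ = ((Real.cos θ : ℂ)) • (1 : Matrix (Fin d) (Fin d) ℂ)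
      - (Complex.I * (Real.sin θ : ℂ)) • G := by
  rw [Wrot, exp_smul_involution G hG]
  have h1 : Complex.exp (-(Complex.I * (θ:ℂ))) = (Real.cos θ : ℂ) - (Real.sin θ:ℂ) * Complex.I := by
    rw [show -(Complex.I * (θ:ℂ)) = (-θ:ℂ) * Complex.I by ring, Complex.exp_mul_I]
    push_cast [Complex.cos_neg, Complex.sin_neg, ← Complex.ofReal_cos, ← Complex.ofReal_sin]
    ring
  have h2 : Complex.exp (-(-(Complex.I * (θ:ℂ)))) = (Real.cos θ : ℂ) + (Real.sin θ:ℂ) * Complex.I := by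
    rw [show -(-(Complex.I * (θ:ℂ))) = (θ:ℂ) * Complex.I by ring, Complex.exp_mul_I]
    rw [← Complex.ofReal_cos, ← Complex.ofReal_sin]
  rw [h1, h2]
  have e1 : ((Real.cos θ:ℂ) - (Real.sin θ:ℂ) * Complex.I + ((Real.cos θ:ℂ) + (Real.sin θ:ℂ) * Complex.I))/2 = (Real.cos θ:ℂ) := by ring
  rw [e1]
  have e2 : ((Real.cos θ:ℂ) - (Real.sin θ:ℂ) * Complex.I - ((Real.cos θ:ℂ) + (Real.sin θ:ℂ) * Complex.I))/2 = -(Complex.I * (Real.sin θ:ℂ)) := by ring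
  rw [e2, neg_smul, sub_eq_add_neg]

/-- The rotated expectation value as a complex identity. -/
lemma trace_rotation_expansion_complex
    (d : ℕ)
    (G O : Matrix (Fin d) (Fin d) ℂ)
    (hGherm : G.IsHermitian) (hGunit : G * G = 1)
    (ρ : Matrix (Fin d) (Fin d) ℂ)
    (θ : ℝ) :
    ((O * (Wrot G θ * ρ * (Wrot G θ)ᴴ)).trace)
      = ((Opart1 G O * ρ).trace)
        + (Real.cos (2 * θ) : ℂ) * ((Opart2 G O * ρ).trace)
        - (Real.sin (2 * θ) : ℂ) * (((Complex.I • (Opart2 G O * G)) * ρ).trace) := by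
  have hW : Wrot G θ = ((Real.cos θ : ℂ)) • (1 : Matrix (Fin d) (Fin d) ℂ)
      - (Complex.I * (Real.sin θ : ℂ)) • G := Wrot_eq G hGunit θ
  have hWH : (Wrot G θ)ᴴ = ((Real.cos θ : ℂ)) • (1 : Matrix (Fin d) (Fin d) ℂ)
      + (Complex.I * (Real.sin θ : ℂ)) • G := by
    rw [hW, conjTranspose_sub, conjTranspose_smul, conjTranspose_smul, conjTranspose_one,
      hGherm.eq]
    rw [show star ((Real.cos θ:ℂ)) = (Real.cos θ:ℂ) from Complex.conj_ofReal _,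
      show star (Complex.I * (Real.sin θ:ℂ)) = -(Complex.I * (Real.sin θ:ℂ)) by
        rw [star_mul', Complex.star_def, Complex.conj_I, Complex.conj_ofReal]; ring,
      neg_smul, sub_neg_eq_add]
  set c : ℂ := (Real.cos θ : ℂ)
  set s : ℂ := (Real.sin θ : ℂ)
  have hGG : ∀ x : Matrix (Fin d) (Fin d) ℂ, G * (G * x) = x := by
    intro x; rw [← Matrix.mul_assoc, hGunit, Matrix.one_mul]
  have c1 : (G * (O * (G * ρ))).trace = (O * (G * (ρ * G))).trace := by
    rw [trace_mul_comm G (O * (G * ρ)), Matrix.mul_assoc, Matrix.mul_assoc]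
  have c2 : (G * (O * ρ)).trace = (O * (ρ * G)).trace := by
    rw [trace_mul_comm G (O * ρ), Matrix.mul_assoc]
  have hcs : c ^ 2 + s ^ 2 = 1 := by
    simp only [c, s]; push_cast; norm_cast
    nlinarith [Real.sin_sq_add_cos_sq θ]
  have hc2 : (Real.cos (2 * θ) : ℂ) = c ^ 2 - s ^ 2 := by
    simp only [c, s]; push_cast [Real.cos_two_mul]; norm_cast
    simp only [Complex.ofReal_sub, Complex.ofReal_pow]
    linear_combination (by exact_mod_cast congrArg Complex.ofReal (Real.sin_sq_add_cos_sq θ) :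
      (Real.sin θ:ℂ)^2 + (Real.cos θ:ℂ)^2 = 1)
  have hs2 : (Real.sin (2 * θ) : ℂ) = 2 * s * c := by
    simp only [c, s]; push_cast [Real.sin_two_mul]; ring
  rw [hWH, hW, Opart1, Opart2]
  simp only [Matrix.mul_add, Matrix.add_mul, Matrix.mul_sub, Matrix.sub_mul,
    Matrix.smul_mul, Matrix.mul_smul, smul_smul, Matrix.mul_one, Matrix.one_mul,
    smul_add, smul_sub, trace_add, trace_sub, trace_smul, Matrix.mul_assoc, hGG,
    smul_eq_mul]
  rw [c1, c2, hc2, hs2]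
  linear_combination ((O*ρ).trace/2 + (O*(G*(ρ*G))).trace/2) * hcs
    - (s^2*(O*(G*(ρ*G))).trace) * Complex.I_sq

/-- Pointwise expansion of the rotated expectation value: with `W(θ) = exp(−iθG)`,
`O₁ = (O + GOG)/2` and `O₂ = (O − GOG)/2`, one has
`Tr[O W ρ W†] = Tr[O₁ρ] + cos(2θ)·Tr[O₂ρ] − sin(2θ)·Tr[iO₂Gρ]`. -/
theorem trace_rotation_expansion
    (d : ℕ) (hd : 1 ≤ d)
    (G O : Matrix (Fin d) (Fin d) ℂ)
    (hGherm : G.IsHermitian) (hGunit : G * G = 1) (hO : O.IsHermitian)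
    (ρ : Matrix (Fin d) (Fin d) ℂ) (hρ : ρ.PosSemidef) (hρtr : ρ.trace = 1)
    (θ : ℝ) :
    ((O * (Wrot G θ * ρ * (Wrot G θ)ᴴ)).trace.re)
      = ((Opart1 G O * ρ).trace.re)
        + Real.cos (2 * θ) * ((Opart2 G O * ρ).trace.re)
        - Real.sin (2 * θ) * (((Complex.I • (Opart2 G O * G)) * ρ).trace.re) := by
  rw [trace_rotation_expansion_complex d G O hGherm hGunit ρ θ, Complex.sub_re,
    Complex.add_re, Complex.mul_re, Complex.mul_re, Complex.ofReal_re, Complex.ofReal_re,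
    Complex.ofReal_im, Complex.ofReal_im]
  ring
end
end
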